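/- Let n ≥ 1, α ∈ (−1, 0], let A₋₁, A₁ ∈ ℂ^{n×n} and let A₂, A₃ ∈ L²((−1,0); ℂ^{n×n}) vanish almost everywhere on (−1, α). Set Δ(λ) = −λI + λ e^{−λ} A₋₁ + e^{−λ} A₁ + ∫_{−1}^0 (λ e^{λs} A₂(s) + e^{λs} A₃(s)) ds and f₂(λ) = det Δ(λ) − det(A₁ + λ A₋₁)·e^{−nλ}. Then limsup_{r→+∞} (1/r)·log|f₂(−r)| ≤ n − 1 − α; in particular this limsup is strictly less than n. -/

import Mathlib

set_option maxHeartbeats 1000000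


open MeasureTheory Set Filter

noncomputable section

-- term bound
lemma pow_term_bound {b d : ℝ} (hb : 0 ≤ b) (hd : 0 ≤ d) {k n : ℕ} (hk : k < n) :
    b ^ k * d ^ (n - k) ≤ d * (b + d) ^ (n - 1) := by
  have h1 : b ^ k ≤ (b + d) ^ k := pow_le_pow_left₀ hb (by linarith) k
  have h2 : d ^ (n - k) = d * d ^ (n - 1 - k) := by
    rw [← pow_succ']
    congr 1
    omega
  have h3 : d ^ (n - 1 - k) ≤ (b + d) ^ (n - 1 - k) := pow_le_pow_left₀ hd (by linarith) _
  calc b ^ k * d ^ (n - k) = d * (b ^ k * d ^ (n - 1 - k)) := by rw [h2]; ring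
    _ ≤ d * ((b + d) ^ k * (b + d) ^ (n - 1 - k)) := by
        apply mul_le_mul_of_nonneg_left (mul_le_mul h1 h3 (pow_nonneg hd _) (pow_nonneg (by linarith) _)) hd
    _ = d * (b + d) ^ (n - 1) := by rw [← pow_add]; congr 2; omega

lemma prod_diff_bound (n : ℕ) (p q : Fin n → ℂ) (b d : ℝ)
    (hb : 0 ≤ b) (hd : 0 ≤ d) (hp : ∀ i, ‖p i‖ ≤ b)
    (hq : ∀ i, ‖q i‖ ≤ d) :
    ‖∏ i, (p i + q i) - ∏ i, p i‖ ≤ 2 ^ n * (d * (b + d) ^ (n - 1)) := by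
  have hexp := Finset.prod_add p q Finset.univ
  have huniv : ((Finset.univ : Finset (Fin n)).powerset) = insert Finset.univ ((Finset.univ.powerset).erase Finset.univ) := by
    rw [Finset.insert_erase (Finset.mem_powerset_self _)]
  rw [hexp, huniv, Finset.sum_insert (Finset.notMem_erase _ _)]
  simp only [Finset.sdiff_self, Finset.prod_empty, mul_one, add_sub_cancel_left]
  calc ‖∑ t ∈ (Finset.univ.powerset).erase Finset.univ, (∏ i ∈ t, p i) * ∏ i ∈ Finset.univ \ t, q i‖
      ≤ ∑ t ∈ (Finset.univ.powerset).erase Finset.univ, ‖(∏ i ∈ t, p i) * ∏ i ∈ Finset.univ \ t, q i‖ := by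
        exact norm_sum_le _ _
    _ ≤ ∑ t ∈ (Finset.univ.powerset).erase Finset.univ, (d * (b + d) ^ (n - 1)) := by
        apply Finset.sum_le_sum
        intro t ht
        have htu : t ≠ Finset.univ := (Finset.mem_erase.mp ht).1
        have hcard : t.card < n := by
          have := Finset.card_lt_card (lt_of_le_of_ne (Finset.subset_univ t) htu)
          simpa using this
        rw [norm_mul, norm_prod, norm_prod]
        calc (∏ i ∈ t, ‖p i‖) * ∏ i ∈ Finset.univ \ t, ‖q i‖
            ≤ b ^ t.card * d ^ (n - t.card) := by
              apply mul_le_mul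
              · calc ∏ i ∈ t, ‖p i‖ ≤ ∏ _i ∈ t, b :=
                      Finset.prod_le_prod (fun i _ => norm_nonneg _) (fun i _ => hp i)
                  _ = b ^ t.card := Finset.prod_const b
              · calc ∏ i ∈ Finset.univ \ t, ‖q i‖ ≤ ∏ _i ∈ Finset.univ \ t, d :=
                      Finset.prod_le_prod (fun i _ => norm_nonneg _) (fun i _ => hq i)
                  _ = d ^ (n - t.card) := by
                      rw [Finset.prod_const, Finset.card_univ_diff]; simp
              · exact Finset.prod_nonneg fun i _ => norm_nonneg _
              · exact pow_nonneg hb _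
          _ ≤ d * (b + d) ^ (n - 1) := pow_term_bound hb hd hcard
    _ ≤ 2 ^ n * (d * (b + d) ^ (n - 1)) := by
        rw [Finset.sum_const, nsmul_eq_mul]
        apply mul_le_mul_of_nonneg_right _ (mul_nonneg hd (pow_nonneg (by linarith) _))
        calc ((Finset.univ.powerset.erase Finset.univ).card : ℝ)
            ≤ (Finset.univ.powerset : Finset (Finset (Fin n))).card := by
              exact_mod_cast Finset.card_le_card (Finset.erase_subset _ _)
          _ = 2 ^ n := by simp [Finset.card_powerset]

lemma det_diff_bound (n : ℕ) (P Q : Matrix (Fin n) (Fin n) ℂ) (b d : ℝ)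
    (hb : 0 ≤ b) (hd : 0 ≤ d) (hP : ∀ i j, ‖P i j‖ ≤ b)
    (hQ : ∀ i j, ‖Q i j‖ ≤ d) :
    ‖(P + Q).det - P.det‖ ≤ (n.factorial : ℝ) * (2 ^ n * (d * (b + d) ^ (n - 1))) := by
  rw [Matrix.det_apply, Matrix.det_apply, ← Finset.sum_sub_distrib]
  calc ‖∑ σ : Equiv.Perm (Fin n), (Equiv.Perm.sign σ • ∏ i, (P + Q) (σ i) i - Equiv.Perm.sign σ • ∏ i, P (σ i) i)‖
      ≤ ∑ σ : Equiv.Perm (Fin n), ‖Equiv.Perm.sign σ • ∏ i, (P + Q) (σ i) i - Equiv.Perm.sign σ • ∏ i, P (σ i) i‖ :=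
        norm_sum_le _ _
    _ ≤ ∑ σ : Equiv.Perm (Fin n), (2 ^ n * (d * (b + d) ^ (n - 1))) := by
        apply Finset.sum_le_sum
        intro σ _
        rw [← smul_sub]
        have : ‖Equiv.Perm.sign σ • ((∏ i, (P + Q) (σ i) i) - ∏ i, P (σ i) i)‖ =
            ‖(∏ i, (P + Q) (σ i) i) - ∏ i, P (σ i) i‖ := by
          rcases Int.units_eq_one_or (Equiv.Perm.sign σ) with h | h <;>
            simp [h, norm_sub_rev]
        rw [this]
        have := prod_diff_bound n (fun i => P (σ i) i) (fun i => Q (σ i) i) b d hb hd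
          (fun i => hP _ _) (fun i => hQ _ _)
        simpa using this
    _ = (n.factorial : ℝ) * (2 ^ n * (d * (b + d) ^ (n - 1))) := by
        rw [Finset.sum_const, nsmul_eq_mul]
        congr 1
        simp [Fintype.card_perm]


/-- the characteristic matrix
`Δ(λ) = -λI + λ e^{-λ} A₋₁ + e^{-λ} A₁ + ∫_{-1}^0 (λ e^{λs} A₂(s) + e^{λs} A₃(s)) ds` -/
def Delta (n : ℕ) (Am1 A1 : Matrix (Fin n) (Fin n) ℂ)
    (A2 A3 : ℝ → Matrix (Fin n) (Fin n) ℂ) (lam : ℂ) : Matrix (Fin n) (Fin n) ℂ :=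
  Matrix.of (fun i j =>
    -lam * (if i = j then 1 else 0) + lam * Complex.exp (-lam) * Am1 i j
      + Complex.exp (-lam) * A1 i j
      + ∫ s in Ioo (-1:ℝ) 0,
          (lam * Complex.exp (lam * s) * A2 s i j + Complex.exp (lam * s) * A3 s i j))

/-- `f₂(λ) = det Δ(λ) - det(A₁ + λ A₋₁) e^{-nλ}` -/
def ftwo (n : ℕ) (Am1 A1 : Matrix (Fin n) (Fin n) ℂ)
    (A2 A3 : ℝ → Matrix (Fin n) (Fin n) ℂ) (lam : ℂ) : ℂ :=
  (Delta n Am1 A1 A2 A3 lam).det - (A1 + lam • Am1).det * Complex.exp (-(n : ℂ) * lam)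

lemma ftwo_bound (n : ℕ) (hn : 1 ≤ n) (α : ℝ) (hα1 : -1 < α) (hα2 : α ≤ 0)
    (Am1 A1 : Matrix (Fin n) (Fin n) ℂ) (A2 A3 : ℝ → Matrix (Fin n) (Fin n) ℂ)
    (hA2 : ∀ i j, MemLp (fun θ => A2 θ i j) 2 (volume.restrict (Ioo (-1:ℝ) 0)))
    (hA3 : ∀ i j, MemLp (fun θ => A3 θ i j) 2 (volume.restrict (Ioo (-1:ℝ) 0)))
    (hA2v : ∀ᵐ θ ∂(volume.restrict (Ioo (-1:ℝ) α)), A2 θ = 0)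
    (hA3v : ∀ᵐ θ ∂(volume.restrict (Ioo (-1:ℝ) α)), A3 θ = 0) :
    ∃ K : ℝ, 1 ≤ K ∧ ∀ r : ℝ, 0 ≤ r →
      ‖ftwo n Am1 A1 A2 A3 (-r : ℂ)‖
        ≤ K * (1 + r) ^ n * Real.exp (((n : ℝ) - 1 - α) * r) := by
  haveI : IsFiniteMeasure (volume.restrict (Ioo (-1:ℝ) 0)) := by
    constructor
    rw [Measure.restrict_apply_univ, Real.volume_Ioo]
    exact ENNReal.ofReal_lt_top
  -- integrability of the entry norms
  have hI2 : ∀ i j, Integrable (fun s => ‖A2 s i j‖)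
      (volume.restrict (Ioo (-1:ℝ) 0)) := fun i j => by
    simpa using ((hA2 i j).integrable (by norm_num)).norm
  have hI3 : ∀ i j, Integrable (fun s => ‖A3 s i j‖)
      (volume.restrict (Ioo (-1:ℝ) 0)) := fun i j => by
    simpa using ((hA3 i j).integrable (by norm_num)).norm
  set M2 : Fin n → Fin n → ℝ := fun i j => ∫ s in Ioo (-1:ℝ) 0, ‖A2 s i j‖ with hM2
  set M3 : Fin n → Fin n → ℝ := fun i j => ∫ s in Ioo (-1:ℝ) 0, ‖A3 s i j‖ with hM3
  have hM2nn : ∀ i j, 0 ≤ M2 i j := fun i j =>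
    integral_nonneg fun s => norm_nonneg _
  have hM3nn : ∀ i j, 0 ≤ M3 i j := fun i j =>
    integral_nonneg fun s => norm_nonneg _
  set Cd : ℝ := 1 + ∑ p : Fin n × Fin n, (M2 p.1 p.2 + M3 p.1 p.2) with hCd
  have hCd1 : 1 ≤ Cd := by
    have : 0 ≤ ∑ p : Fin n × Fin n, (M2 p.1 p.2 + M3 p.1 p.2) :=
      Finset.sum_nonneg fun p _ => add_nonneg (hM2nn _ _) (hM3nn _ _)
    linarith
  have hMCd : ∀ i j, M2 i j + M3 i j ≤ Cd := by
    intro i j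
    have := Finset.single_le_sum (f := fun p : Fin n × Fin n => M2 p.1 p.2 + M3 p.1 p.2)
      (fun p _ => add_nonneg (hM2nn _ _) (hM3nn _ _)) (Finset.mem_univ (i, j))
    dsimp only at this
    simp only [hCd]; linarith
  set Cb : ℝ := 1 + ∑ p : Fin n × Fin n, (‖A1 p.1 p.2‖ + ‖Am1 p.1 p.2‖) with hCb
  have hCb1 : 1 ≤ Cb := by
    have : 0 ≤ ∑ p : Fin n × Fin n, (‖A1 p.1 p.2‖ + ‖Am1 p.1 p.2‖) :=
      Finset.sum_nonneg fun p _ => add_nonneg (norm_nonneg _) (norm_nonneg _)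
    linarith
  have hACb : ∀ i j, ‖A1 i j‖ + ‖Am1 i j‖ ≤ Cb := by
    intro i j
    have := Finset.single_le_sum
      (f := fun p : Fin n × Fin n => ‖A1 p.1 p.2‖ + ‖Am1 p.1 p.2‖)
      (fun p _ => add_nonneg (norm_nonneg _) (norm_nonneg _)) (Finset.mem_univ (i, j))
    dsimp only at this
    simp only [hCb]; linarith
  set CD : ℝ := Cd + 1 with hCD
  refine ⟨(n.factorial : ℝ) * 2 ^ n * CD * (Cb + CD) ^ (n - 1), ?_, ?_⟩
  · have h1 : (1:ℝ) ≤ (n.factorial : ℝ) := by exact_mod_cast n.factorial_pos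
    have h2 : (1:ℝ) ≤ 2 ^ n := one_le_pow₀ (by norm_num)
    have h3 : (1:ℝ) ≤ CD := by simp only [hCD]; linarith
    have h4 : (1:ℝ) ≤ (Cb + CD) ^ (n-1) := one_le_pow₀ (by linarith)
    have h12 : (1:ℝ) ≤ (n.factorial : ℝ) * 2 ^ n := by nlinarith
    have h123 : (1:ℝ) ≤ (n.factorial : ℝ) * 2 ^ n * CD := by nlinarith
    nlinarith
  intro r hr
  set lam : ℂ := (-r : ℂ) with hlam
  -- the a.e. vanishing transferred
  have hv2 : ∀ᵐ (s : ℝ) ∂(volume.restrict (Ioo (-1:ℝ) 0)), s ∈ Ioo (-1:ℝ) α → A2 s = 0 :=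
    ae_restrict_of_ae ((ae_restrict_iff' measurableSet_Ioo).mp hA2v)
  have hv3 : ∀ᵐ (s : ℝ) ∂(volume.restrict (Ioo (-1:ℝ) 0)), s ∈ Ioo (-1:ℝ) α → A3 s = 0 :=
    ae_restrict_of_ae ((ae_restrict_iff' measurableSet_Ioo).mp hA3v)
  have hmem : ∀ᵐ (s : ℝ) ∂(volume.restrict (Ioo (-1:ℝ) 0)), s ∈ Ioo (-1:ℝ) 0 :=
    ae_restrict_mem measurableSet_Ioo
  -- integral entry bound
  have hint : ∀ i j, ‖∫ s in Ioo (-1:ℝ) 0,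
      (lam * Complex.exp (lam * (s:ℂ)) * A2 s i j + Complex.exp (lam * (s:ℂ)) * A3 s i j)‖
      ≤ Real.exp (-r * α) * (r * M2 i j + M3 i j) := by
    intro i j
    have habs : ∀ᵐ (s : ℝ) ∂(volume.restrict (Ioo (-1:ℝ) 0)),
        ‖lam * Complex.exp (lam * (s:ℂ)) * A2 s i j + Complex.exp (lam * (s:ℂ)) * A3 s i j‖ ≤
          Real.exp (-r * α) * (r * ‖A2 s i j‖ + ‖A3 s i j‖) := by
      filter_upwards [hv2, hv3, hmem] with s h2 h3 hs
      by_cases hsα : s < α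
      · rw [h2 ⟨hs.1, hsα⟩, h3 ⟨hs.1, hsα⟩]
        simp only [Matrix.zero_apply, mul_zero, add_zero, norm_zero]
        positivity
      · push_neg at hsα
        have hexp : ‖Complex.exp (lam * (s:ℂ))‖ = Real.exp (-r * s) := by
          rw [Complex.norm_exp]
          congr 1
          simp [hlam]
        have hle : Real.exp (-r * s) ≤ Real.exp (-r * α) := by
          apply Real.exp_le_exp.mpr
          nlinarith
        have hlamabs : ‖lam‖ = r := by
          simp [hlam, abs_of_nonneg hr]
        calc ‖lam * Complex.exp (lam * (s:ℂ)) * A2 s i j + Complex.exp (lam * (s:ℂ)) * A3 s i j‖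
            ≤ ‖lam * Complex.exp (lam * (s:ℂ)) * A2 s i j‖
              + ‖Complex.exp (lam * (s:ℂ)) * A3 s i j‖ := norm_add_le _ _
          _ = r * Real.exp (-r*s) * ‖A2 s i j‖
              + Real.exp (-r*s) * ‖A3 s i j‖ := by
              rw [norm_mul, norm_mul, norm_mul, hexp, hlamabs]
          _ ≤ Real.exp (-r * α) * (r * ‖A2 s i j‖ + ‖A3 s i j‖) := by
              have e1 : (0:ℝ) < Real.exp (-r*s) := Real.exp_pos _
              nlinarith [norm_nonneg (A2 s i j), norm_nonneg (A3 s i j),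
                mul_nonneg (sub_nonneg.mpr hle)
                  (add_nonneg (mul_nonneg hr (norm_nonneg (A2 s i j)))
                    (norm_nonneg (A3 s i j)))]
    have hInt : Integrable (fun s => Real.exp (-r * α) * (r * ‖A2 s i j‖
        + ‖A3 s i j‖)) (volume.restrict (Ioo (-1:ℝ) 0)) :=
      (((hI2 i j).const_mul r).add (hI3 i j)).const_mul _
    calc ‖∫ s in Ioo (-1:ℝ) 0,
          (lam * Complex.exp (lam * (s:ℂ)) * A2 s i j + Complex.exp (lam * (s:ℂ)) * A3 s i j)‖
        ≤ ∫ s in Ioo (-1:ℝ) 0,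
            ‖lam * Complex.exp (lam * (s:ℂ)) * A2 s i j + Complex.exp (lam * (s:ℂ)) * A3 s i j‖ := by
          exact norm_integral_le_integral_norm _
      _ ≤ ∫ s in Ioo (-1:ℝ) 0, Real.exp (-r * α) * (r * ‖A2 s i j‖
            + ‖A3 s i j‖) :=
          integral_mono_of_nonneg (Eventually.of_forall fun s => norm_nonneg _) hInt habs
      _ = Real.exp (-r * α) * (r * M2 i j + M3 i j) := by
          rw [integral_const_mul, integral_add ((hI2 i j).const_mul r) (hI3 i j),
            integral_const_mul]

  have hlamabs : ‖lam‖ = r := by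
    simp [hlam, abs_of_nonneg hr]
  have hexpr : ‖Complex.exp (-lam)‖ = Real.exp r := by
    rw [Complex.norm_exp]; congr 1; simp [hlam]
  set P : Matrix (Fin n) (Fin n) ℂ :=
    Matrix.of (fun i j => Complex.exp (-lam) * (A1 i j + lam * Am1 i j)) with hPdef
  set Q : Matrix (Fin n) (Fin n) ℂ :=
    Matrix.of (fun i j => -lam * (if i = j then 1 else 0)
      + ∫ s in Ioo (-1:ℝ) 0,
          (lam * Complex.exp (lam * (s:ℂ)) * A2 s i j + Complex.exp (lam * (s:ℂ)) * A3 s i j)) with hQdef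
  have hDelta : Delta n Am1 A1 A2 A3 lam = P + Q := by
    ext i j
    simp only [Delta, Matrix.add_apply, Matrix.of_apply, hPdef, hQdef]
    ring
  have hdetP : P.det = (A1 + lam • Am1).det * Complex.exp (-(n : ℂ) * lam) := by
    have hsm : P = Complex.exp (-lam) • (A1 + lam • Am1) := by
      ext i j
      simp only [hPdef, Matrix.of_apply, Matrix.smul_apply, Matrix.add_apply, smul_eq_mul]
      try ring
    rw [hsm, Matrix.det_smul, Fintype.card_fin]
    rw [show (-(n:ℂ) * lam) = (n:ℂ) * -lam by ring]
    rw [Complex.exp_nat_mul]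
    try ring
  have hPb : ∀ i j, ‖P i j‖ ≤ Cb * (1 + r) * Real.exp r := by
    intro i j
    simp only [hPdef, Matrix.of_apply]
    rw [norm_mul, hexpr]
    have h2 : ‖A1 i j + lam * Am1 i j‖ ≤ Cb * (1 + r) := by
      calc ‖A1 i j + lam * Am1 i j‖
          ≤ ‖A1 i j‖ + ‖lam‖ * ‖Am1 i j‖ := by
            refine (norm_add_le _ _).trans ?_
            rw [norm_mul]
        _ ≤ Cb * (1 + r) := by
            have := hACb i j
            nlinarith [norm_nonneg (A1 i j), norm_nonneg (Am1 i j), hlamabs]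
    nlinarith [Real.exp_pos r, norm_nonneg (A1 i j + lam * Am1 i j),
      Real.one_le_exp hr]
  have hE1 : (1:ℝ) ≤ Real.exp (-r * α) := Real.one_le_exp (by nlinarith)
  have hQb : ∀ i j, ‖Q i j‖ ≤ CD * (1 + r) * Real.exp (-r * α) := by
    intro i j
    simp only [hQdef, Matrix.of_apply]
    calc ‖-lam * (if i = j then 1 else 0)
          + ∫ s in Ioo (-1:ℝ) 0,
            (lam * Complex.exp (lam * (s:ℂ)) * A2 s i j + Complex.exp (lam * (s:ℂ)) * A3 s i j)‖
        ≤ ‖-lam * (if i = j then 1 else 0)‖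
          + ‖∫ s in Ioo (-1:ℝ) 0,
            (lam * Complex.exp (lam * (s:ℂ)) * A2 s i j + Complex.exp (lam * (s:ℂ)) * A3 s i j)‖ :=
          norm_add_le _ _
      _ ≤ r + Real.exp (-r * α) * (r * M2 i j + M3 i j) := by
          have h1 : ‖-lam * (if i = j then 1 else 0)‖ ≤ r := by
            rw [norm_mul, norm_neg, hlamabs]
            split_ifs <;> simp [hr]
          exact add_le_add h1 (hint i j)
      _ ≤ CD * (1 + r) * Real.exp (-r * α) := by
          have h2 := hMCd i j
          have h3 := hM2nn i j
          have h4 := hM3nn i j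
          have h5 : r * M2 i j + M3 i j ≤ (1 + r) * Cd := by nlinarith
          have h6 : 0 < Real.exp (-r * α) := Real.exp_pos _
          nlinarith [mul_le_mul_of_nonneg_left h5 (le_of_lt h6),
            mul_le_mul_of_nonneg_left hE1 (by linarith : (0:ℝ) ≤ 1 + r), hCd1]
  have hb0 : (0:ℝ) ≤ Cb * (1 + r) * Real.exp r :=
    mul_nonneg (mul_nonneg (by linarith) (by linarith)) (Real.exp_pos r).le
  have hd0 : (0:ℝ) ≤ CD * (1 + r) * Real.exp (-r * α) := by
    have h3 : (1:ℝ) ≤ CD := by simp only [hCD]; linarith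
    exact mul_nonneg (mul_nonneg (by linarith) (by linarith)) (Real.exp_pos _).le
  have key := det_diff_bound n P Q _ _ hb0 hd0 hPb hQb
  have hftwo : ftwo n Am1 A1 A2 A3 lam = (P + Q).det - P.det := by
    rw [ftwo, hDelta, hdetP]
  rw [hftwo]
  have hCD1 : (1:ℝ) ≤ CD := by simp only [hCD]; linarith
  -- combine
  have hbd : Cb * (1 + r) * Real.exp r + CD * (1 + r) * Real.exp (-r * α)
      ≤ (Cb + CD) * (1 + r) * Real.exp r := by
    have hEE : Real.exp (-r * α) ≤ Real.exp r := Real.exp_le_exp.mpr (by nlinarith)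
    nlinarith [Real.exp_pos r, mul_le_mul_of_nonneg_left hEE
      (by nlinarith : (0:ℝ) ≤ CD * (1 + r))]
  have hX0 : (0:ℝ) ≤ (Cb + CD) * (1 + r) * Real.exp r := by nlinarith [Real.exp_pos r]
  have hmono : (Cb * (1 + r) * Real.exp r + CD * (1 + r) * Real.exp (-r * α)) ^ (n - 1)
      ≤ ((Cb + CD) * (1 + r) * Real.exp r) ^ (n - 1) :=
    pow_le_pow_left₀ (by linarith) hbd _
  have hE : Real.exp (-r * α) * (Real.exp r) ^ (n - 1) = Real.exp (((n : ℝ) - 1 - α) * r) := by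
    rw [← Real.exp_nat_mul, ← Real.exp_add]
    congr 1
    have : ((n - 1 : ℕ) : ℝ) = (n : ℝ) - 1 := by
      push_cast [Nat.cast_sub hn]; ring
    rw [this]; ring
  have hpow : (1 + r) * (1 + r) ^ (n - 1) = (1 + r) ^ n := by
    rw [← pow_succ']
    congr 1
    omega
  calc ‖(P + Q).det - P.det‖
      ≤ (n.factorial : ℝ) * (2 ^ n * ((CD * (1 + r) * Real.exp (-r * α))
          * (Cb * (1 + r) * Real.exp r + CD * (1 + r) * Real.exp (-r * α)) ^ (n - 1))) := key
    _ ≤ (n.factorial : ℝ) * (2 ^ n * ((CD * (1 + r) * Real.exp (-r * α))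
          * ((Cb + CD) * (1 + r) * Real.exp r) ^ (n - 1))) := by
        apply mul_le_mul_of_nonneg_left _ (by positivity)
        apply mul_le_mul_of_nonneg_left _ (by positivity)
        exact mul_le_mul_of_nonneg_left hmono hd0
    _ = (n.factorial : ℝ) * 2 ^ n * CD * (Cb + CD) ^ (n - 1) * (1 + r) ^ n
          * Real.exp (((n : ℝ) - 1 - α) * r) := by
        rw [← hE, ← hpow, mul_pow, mul_pow]
        ring

theorem stmt15 (n : ℕ) (hn : 1 ≤ n) (α : ℝ) (hα1 : -1 < α) (hα2 : α ≤ 0)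
    (Am1 A1 : Matrix (Fin n) (Fin n) ℂ) (A2 A3 : ℝ → Matrix (Fin n) (Fin n) ℂ)
    (hA2 : ∀ i j, MemLp (fun θ => A2 θ i j) 2 (volume.restrict (Ioo (-1:ℝ) 0)))
    (hA3 : ∀ i j, MemLp (fun θ => A3 θ i j) 2 (volume.restrict (Ioo (-1:ℝ) 0)))
    (hA2v : ∀ᵐ θ ∂(volume.restrict (Ioo (-1:ℝ) α)), A2 θ = 0)
    (hA3v : ∀ᵐ θ ∂(volume.restrict (Ioo (-1:ℝ) α)), A3 θ = 0) :
    Filter.limsup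
        (fun r : ℝ =>
          (((1 / r) * Real.log (‖ftwo n Am1 A1 A2 A3 (-r : ℂ)‖)) : EReal))
        Filter.atTop
      ≤ (((n : ℝ) - 1 - α : ℝ) : EReal) ∧
    Filter.limsup
        (fun r : ℝ =>
          (((1 / r) * Real.log (‖ftwo n Am1 A1 A2 A3 (-r : ℂ)‖)) : EReal))
        Filter.atTop
      < ((n : ℝ) : EReal) := by
  obtain ⟨K, hK1, hK⟩ := ftwo_bound n hn α hα1 hα2 Am1 A1 A2 A3 hA2 hA3 hA2v hA3v
  set c : ℝ := (n : ℝ) - 1 - α with hc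
  have hc0 : 0 ≤ c := by
    have h1 : (1:ℝ) ≤ n := by exact_mod_cast hn
    simp only [hc]; linarith
  set g : ℝ → ℝ := fun r =>
    (1 / r) * Real.log (‖ftwo n Am1 A1 A2 A3 (-r : ℂ)‖) with hg
  set φ : ℝ → ℝ := fun r => Real.log K / r + (n : ℝ) * (Real.log (1 + r) / r) + c with hφ
  have hle : ∀ᶠ r in atTop, g r ≤ φ r := by
    filter_upwards [eventually_ge_atTop (1:ℝ)] with r hr1
    have hr0 : (0:ℝ) < r := by linarith
    have hb := hK r (by linarith)
    have h1r : (0:ℝ) < 1 + r := by linarith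
    have hlogK : 0 ≤ Real.log K := Real.log_nonneg hK1
    have hlog1r : 0 ≤ Real.log (1 + r) := Real.log_nonneg (by linarith)
    by_cases h0 : ‖ftwo n Am1 A1 A2 A3 (-r : ℂ)‖ = 0
    · have hg0 : g r = 0 := by simp [hg, h0]
      rw [hg0]
      have t1 : 0 ≤ Real.log K / r := div_nonneg hlogK hr0.le
      have t2 : 0 ≤ (n : ℝ) * (Real.log (1 + r) / r) := by positivity
      simp only [hφ]; linarith
    · have hpos : 0 < ‖ftwo n Am1 A1 A2 A3 (-r : ℂ)‖ :=
        lt_of_le_of_ne (norm_nonneg _) (Ne.symm h0)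
      have hlog : Real.log (‖ftwo n Am1 A1 A2 A3 (-r : ℂ)‖)
          ≤ Real.log (K * (1 + r) ^ n * Real.exp (c * r)) := Real.log_le_log hpos hb
      rw [Real.log_mul (by positivity) (Real.exp_ne_zero _),
        Real.log_mul (by positivity) (by positivity), Real.log_pow, Real.log_exp] at hlog
      have : g r ≤ (1 / r) * (Real.log K + n * Real.log (1 + r) + c * r) := by
        simp only [hg]
        apply mul_le_mul_of_nonneg_left _ (by positivity)
        linarith
      calc g r ≤ (1 / r) * (Real.log K + n * Real.log (1 + r) + c * r) := this
        _ = φ r := by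
          simp only [hφ]
          field_simp
          try ring
  have hφt : Tendsto φ atTop (nhds c) := by
    have t1 : Tendsto (fun r : ℝ => Real.log K / r) atTop (nhds 0) :=
      tendsto_const_nhds.div_atTop tendsto_id
    have t2a : Tendsto (fun r : ℝ => Real.log (1 + r) / (1 + r)) atTop (nhds 0) :=
      (Real.isLittleO_log_id_atTop.tendsto_div_nhds_zero).comp
        (tendsto_atTop_add_const_left atTop 1 tendsto_id)
    have t2b : Tendsto (fun r : ℝ => (1 + r) / r) atTop (nhds 1) := by
      have : Tendsto (fun r : ℝ => 1 / r + 1) atTop (nhds 1) := by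
        have h0 : Tendsto (fun r : ℝ => 1 / r + 1) atTop (nhds (0 + 1)) :=
          Tendsto.add (tendsto_const_nhds.div_atTop tendsto_id) tendsto_const_nhds
        simpa using h0
      apply this.congr'
      filter_upwards [eventually_gt_atTop (0:ℝ)] with r hr
      field_simp
    have t2 : Tendsto (fun r : ℝ => Real.log (1 + r) / r) atTop (nhds 0) := by
      have := t2a.mul t2b
      rw [zero_mul] at this
      apply this.congr'
      filter_upwards [eventually_gt_atTop (0:ℝ)] with r hr
      have h1r : (1:ℝ) + r ≠ 0 := by positivity
      field_simp
    have := (t1.add ((t2.const_mul (n : ℝ)))).add_const c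
    simpa using this
  have hlimsup : Filter.limsup (fun r : ℝ => ((g r : ℝ) : EReal)) atTop ≤ (c : EReal) := by
    have h2 : Tendsto (fun r : ℝ => ((φ r : ℝ) : EReal)) atTop (nhds (c : EReal)) :=
      EReal.tendsto_coe.mpr hφt
    have h1 : Filter.limsup (fun r : ℝ => ((g r : ℝ) : EReal)) atTop
        ≤ Filter.limsup (fun r : ℝ => ((φ r : ℝ) : EReal)) atTop :=
      limsup_le_limsup (by filter_upwards [hle] with r h using EReal.coe_le_coe_iff.mpr h)
    rwa [h2.limsup_eq] at h1
  refine ⟨hlimsup, lt_of_le_of_lt hlimsup ?_⟩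
  rw [EReal.coe_lt_coe_iff]
  simp only [hc]
  linarith
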